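/- The measured conditional entropy Σ_i p_i S(ρ_{A|i}) is a concave function of the POVM on B (viewed as a point of the convex set of POVMs with a fixed outcome set); hence its minimum over all POVMs is attained at an extreme point of that set. -/

import Mathlib

open scoped BigOperators Kronecker ComplexOrder
open Matrix

noncomputable section

/-- `-(x log₂ x)`, the summand of Shannon entropy. -/
def negxlog (x : ℝ) : ℝ := -(x * Real.logb 2 x)

/-- Von Neumann entropy (base-2) of a matrix, via the eigenvalues of a Hermitian matrix. -/
def vnEntropy {n : Type*} [Fintype n] [DecidableEq n] (ρ : Matrix n n ℂ) : ℝ :=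
  if h : ρ.IsHermitian then ∑ i, negxlog (h.eigenvalues i) else 0

/-- A density operator: positive semidefinite with unit trace. -/
def IsDensity {n : Type*} [Fintype n] [DecidableEq n] (ρ : Matrix n n ℂ) : Prop :=
  ρ.PosSemidef ∧ ρ.trace = 1

/-- Partial trace over the second factor. -/
def trB {α β : Type*} [Fintype β] (ρ : Matrix (α × β) (α × β) ℂ) : Matrix α α ℂ :=
  fun i j => ∑ k, ρ (i, k) (j, k)

/-- Partial trace over the first factor. -/
def trA {α β : Type*} [Fintype α] (ρ : Matrix (α × β) (α × β) ℂ) : Matrix β β ℂ :=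
  fun i j => ∑ k, ρ (k, i) (k, j)

/-- Partial trace over the third factor of a tripartite system `α × (β × γ)`. -/
def trC3 {α β γ : Type*} [Fintype γ] (ρ : Matrix (α × β × γ) (α × β × γ) ℂ) :
    Matrix (α × β) (α × β) ℂ :=
  fun i j => ∑ k, ρ (i.1, (i.2, k)) (j.1, (j.2, k))

/-- Partial trace over the second factor of a tripartite system `α × (β × γ)`. -/
def trB3 {α β γ : Type*} [Fintype β] (ρ : Matrix (α × β × γ) (α × β × γ) ℂ) :
    Matrix (α × γ) (α × γ) ℂ :=
  fun i j => ∑ k, ρ (i.1, (k, i.2)) (j.1, (k, j.2))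

/-- Partial trace over the first and third factors of a tripartite system `α × (β × γ)`. -/
def trAC3 {α β γ : Type*} [Fintype α] [Fintype γ] (ρ : Matrix (α × β × γ) (α × β × γ) ℂ) :
    Matrix β β ℂ :=
  fun i j => ∑ k : α, ∑ l : γ, ρ (k, (i, l)) (k, (j, l))

/-- A family of vectors is orthonormal. -/
def OrthonormalFam {ι β : Type*} [Fintype β] [DecidableEq ι] (e : ι → β → ℂ) : Prop :=
  ∀ i j, (∑ x, (starRingEnd ℂ) (e i x) * e j x) = if i = j then 1 else 0

/-- The rank-one operator `|v⟩⟨v|`. -/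
def projKet {β : Type*} (v : β → ℂ) : Matrix β β ℂ :=
  Matrix.vecMulVec v (star v)

/-- An orthonormal basis of `β`: an orthonormal family which is complete. -/
def IsONB {β : Type*} [Fintype β] [DecidableEq β] (e : β → β → ℂ) : Prop :=
  OrthonormalFam e ∧ (∑ j, projKet (e j)) = 1

/-- The operator `(I_A ⊗ ⟨v|) ρ (I_A ⊗ |w⟩)` on `A`. -/
def condOp2 {α β : Type*} [Fintype α] [Fintype β]
    (ρ : Matrix (α × β) (α × β) ℂ) (v w : β → ℂ) : Matrix α α ℂ :=
  fun i j => ∑ x, ∑ y, (starRingEnd ℂ) (v x) * ρ (i, x) (j, y) * w y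

/-- The unnormalized conditional operator `(I_A ⊗ ⟨v|) ρ (I_A ⊗ |v⟩)`. -/
def condOp {α β : Type*} [Fintype α] [Fintype β]
    (ρ : Matrix (α × β) (α × β) ℂ) (v : β → ℂ) : Matrix α α ℂ :=
  condOp2 ρ v v

/-- Outcome probability `p = Tr(ρ (I ⊗ |v⟩⟨v|))`. -/
def prob {α β : Type*} [Fintype α] [Fintype β]
    (ρ : Matrix (α × β) (α × β) ℂ) (v : β → ℂ) : ℝ :=
  (Matrix.trace (condOp ρ v)).re

/-- Normalized conditional state `ρ_{A|v}`. -/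
def condState {α β : Type*} [Fintype α] [Fintype β]
    (ρ : Matrix (α × β) (α × β) ℂ) (v : β → ℂ) : Matrix α α ℂ :=
  (prob ρ v)⁻¹ • condOp ρ v

/-- Measured (average) conditional entropy `Σ_i p_i S(ρ_{A|i})` for rank-one elements `|v i⟩⟨v i|`. -/
def measCondEnt {α β ι : Type*} [Fintype α] [Fintype β] [DecidableEq α]
    [Fintype ι] (ρ : Matrix (α × β) (α × β) ℂ) (v : ι → β → ℂ) : ℝ :=
  ∑ i, prob ρ (v i) * vnEntropy (condState ρ (v i))

/-- Quantum conditional entropy `S(A|B) = S(ρ_AB) - S(ρ_B)`. -/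
def condEnt {α β : Type*} [Fintype α] [Fintype β] [DecidableEq α] [DecidableEq β]
    (ρ : Matrix (α × β) (α × β) ℂ) : ℝ :=
  vnEntropy ρ - vnEntropy (trA ρ)

/-- Quantum mutual information `I(A:B) = S(ρ_A) + S(ρ_B) - S(ρ_AB)`. -/
def mutualInfo {α β : Type*} [Fintype α] [Fintype β] [DecidableEq α] [DecidableEq β]
    (ρ : Matrix (α × β) (α × β) ℂ) : ℝ :=
  vnEntropy (trB ρ) + vnEntropy (trA ρ) - vnEntropy ρ

/-- Quantum discord `D(A:B) = inf over rank-1 POVMs of S̃(A|B) - S(A|B)`. -/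
def discord (α β : Type*) [Fintype α] [Fintype β] [DecidableEq α] [DecidableEq β]
    (ρ : Matrix (α × β) (α × β) ℂ) : ℝ :=
  sInf { r : ℝ | ∃ (n : ℕ) (v : Fin n → β → ℂ),
      (∑ i, projKet (v i)) = 1 ∧ r = measCondEnt ρ v } - condEnt ρ

/-- A POVM: positive semidefinite elements summing to the identity. -/
def IsPOVM {β ι : Type*} [Fintype β] [DecidableEq β] [Fintype ι]
    (M : ι → Matrix β β ℂ) : Prop :=
  (∀ i, (M i).PosSemidef) ∧ (∑ i, M i) = 1

/-- Outcome probability for a general POVM element. -/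
def povmProb {α β : Type*} [Fintype α] [Fintype β] [DecidableEq α] [DecidableEq β]
    (ρ : Matrix (α × β) (α × β) ℂ) (M : Matrix β β ℂ) : ℝ :=
  (Matrix.trace (trB (ρ * ((1 : Matrix α α ℂ) ⊗ₖ M)))).re

/-- Normalized conditional state for a general POVM element. -/
def povmCondState {α β : Type*} [Fintype α] [Fintype β] [DecidableEq α] [DecidableEq β]
    (ρ : Matrix (α × β) (α × β) ℂ) (M : Matrix β β ℂ) : Matrix α α ℂ :=
  (povmProb ρ M)⁻¹ • trB (ρ * ((1 : Matrix α α ℂ) ⊗ₖ M))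

/-- Measured conditional entropy for a general POVM. -/
def povmMCE {α β ι : Type*} [Fintype α] [Fintype β] [DecidableEq α] [DecidableEq β]
    [Fintype ι] (ρ : Matrix (α × β) (α × β) ℂ) (M : ι → Matrix β β ℂ) : ℝ :=
  ∑ i, povmProb ρ (M i) * vnEntropy (povmCondState ρ (M i))

end

open scoped MatrixOrder in
theorem Matrix.posSemidef_iff_eq_transpose_mul_self {n : Type*} [Fintype n] [DecidableEq n]
    {M : Matrix n n ℂ} : M.PosSemidef ↔ ∃ B : Matrix n n ℂ, M = Bᴴ * B := by
  constructor
  · intro hM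
    obtain ⟨B, hB⟩ := CStarAlgebra.nonneg_iff_eq_star_mul_self.mp hM.nonneg
    exact ⟨B, hB⟩
  · rintro ⟨B, rfl⟩
    exact Matrix.posSemidef_conjTranspose_mul_self B

open scoped MatrixOrder in
noncomputable def Matrix.PosSemidef.sqrt {n : Type*} [Fintype n] [DecidableEq n]
    {M : Matrix n n ℂ} (_hM : M.PosSemidef) : Matrix n n ℂ := CFC.sqrt M

open scoped MatrixOrder in
theorem Matrix.PosSemidef.posSemidef_sqrt {n : Type*} [Fintype n] [DecidableEq n]
    {M : Matrix n n ℂ} (hM : M.PosSemidef) : hM.sqrt.PosSemidef :=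
  (CFC.sqrt_nonneg M).posSemidef

open scoped MatrixOrder in
theorem Matrix.PosSemidef.sqrt_mul_self {n : Type*} [Fintype n] [DecidableEq n]
    {M : Matrix n n ℂ} (hM : M.PosSemidef) : hM.sqrt * hM.sqrt = M :=
  CFC.sqrt_mul_sqrt_self M hM.nonneg

noncomputable section Aux

open Polynomial in
/-- Two tuples of reals with equal products `∏ (t - μ j)` for all `t` have equal multisets. -/
lemma aux_multiset_eq_of_prod_eq {n : Type*} [Fintype n] (μ ν : n → ℝ)
    (h : ∀ t : ℝ, ∏ j, (t - μ j) = ∏ j, (t - ν j)) :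
    Finset.univ.val.map μ = Finset.univ.val.map ν := by
  have hP : ((Finset.univ.val.map μ).map (fun a : ℝ => X - C a)).prod
      = ((Finset.univ.val.map ν).map (fun a : ℝ => X - C a)).prod := by
    apply Polynomial.funext
    intro t
    have e1 : ∀ (w : n → ℝ), (((Finset.univ.val.map w).map (fun a : ℝ => X - C a)).prod).eval t
        = ∏ j, (t - w j) := by
      intro w
      rw [Multiset.map_map, ← Finset.prod_eq_multiset_prod]
      simp [Polynomial.eval_prod]
    rw [e1, e1]; exact h t
  have := congrArg Polynomial.roots hP
  rwa [Polynomial.roots_multiset_prod_X_sub_C, Polynomial.roots_multiset_prod_X_sub_C] at this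

lemma aux_sum_eq_of_prod_eq {n : Type*} [Fintype n] (μ ν : n → ℝ) (f : ℝ → ℝ)
    (h : ∀ t : ℝ, ∏ j, (t - μ j) = ∏ j, (t - ν j)) :
    ∑ j, f (μ j) = ∑ j, f (ν j) := by
  have := congrArg (fun m : Multiset ℝ => (m.map f).sum) (aux_multiset_eq_of_prod_eq μ ν h)
  simp only [Multiset.map_map, Function.comp] at this
  rw [Finset.sum_eq_multiset_sum, Finset.sum_eq_multiset_sum]
  exact this

lemma aux_negxlog_eq : negxlog = fun x => (Real.log 2)⁻¹ • Real.negMulLog x := by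
  funext x
  simp only [negxlog, Real.negMulLog, Real.logb, smul_eq_mul]
  ring

lemma aux_negxlog_concave : ConcaveOn ℝ (Set.Ici 0) negxlog := by
  rw [aux_negxlog_eq]
  exact Real.concaveOn_negMulLog.smul (by positivity)

lemma aux_negxlog_continuous : Continuous negxlog := by
  rw [aux_negxlog_eq]
  exact Real.continuous_negMulLog.const_smul (Real.log 2)⁻¹

lemma aux_vnEntropy_eq {n : Type*} [Fintype n] [DecidableEq n] {A : Matrix n n ℂ}
    (hA : A.IsHermitian) : vnEntropy A = ∑ i, negxlog (hA.eigenvalues i) := by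
  rw [vnEntropy, dif_pos hA]

end Aux

namespace AuxSpec

open Matrix

variable {n : Type*} [Fintype n] [DecidableEq n]

lemma aux_smul_one_sub_diag (t : ℝ) (d : n → ℝ) :
    (t : ℂ) • (1 : Matrix n n ℂ) - Matrix.diagonal (RCLike.ofReal ∘ d)
      = Matrix.diagonal (fun j => (t : ℂ) - (d j : ℂ)) := by
  ext i j
  by_cases h : i = j <;>
    simp [h, Matrix.diagonal_apply, Matrix.one_apply, Matrix.sub_apply]

lemma aux_specdet {A : Matrix n n ℂ} (hA : A.IsHermitian) (t : ℝ) :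
    Matrix.det ((t : ℂ) • (1 : Matrix n n ℂ) - A)
      = ∏ j, ((t : ℂ) - (hA.eigenvalues j : ℂ)) := by
  set U : Matrix n n ℂ := (Matrix.IsHermitian.eigenvectorUnitary hA : Matrix n n ℂ) with hU
  have hU1 : U * star U = 1 :=
    Matrix.mem_unitaryGroup_iff.mp (Matrix.IsHermitian.eigenvectorUnitary hA).2
  have hU2 : star U * U = 1 :=
    Matrix.mem_unitaryGroup_iff'.mp (Matrix.IsHermitian.eigenvectorUnitary hA).2
  set D : Matrix n n ℂ := Matrix.diagonal (RCLike.ofReal ∘ hA.eigenvalues) with hD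
  have key : (t : ℂ) • (1 : Matrix n n ℂ) - A = U * ((t : ℂ) • 1 - D) * star U := by
    rw [Matrix.mul_sub, Matrix.sub_mul]
    congr 1
    · rw [Matrix.mul_smul, mul_one, Matrix.smul_mul, hU1]
    · exact congrArg (· * star U) rfl |>.trans rfl |>.symm ▸ (hA.spectral_theorem).symm ▸ rfl
  rw [key, Matrix.det_mul, Matrix.det_mul]
  have : Matrix.det U * Matrix.det ((t : ℂ) • 1 - D) * Matrix.det (star U)
      = Matrix.det ((t : ℂ) • 1 - D) * (Matrix.det U * Matrix.det (star U)) := by ring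
  rw [this, ← Matrix.det_mul, hU1, Matrix.det_one, mul_one, aux_smul_one_sub_diag,
    Matrix.det_diagonal]

lemma aux_trace_eq {A : Matrix n n ℂ} (hA : A.IsHermitian) :
    A.trace = ∑ j, (hA.eigenvalues j : ℂ) := by
  conv_lhs => rw [hA.spectral_theorem, Unitary.conjStarAlgAut_apply]
  rw [Matrix.trace_mul_cycle,
    Matrix.mem_unitaryGroup_iff'.mp (Matrix.IsHermitian.eigenvectorUnitary hA).2, one_mul,
    Matrix.trace_diagonal]
  rfl

lemma aux_trace_sq {A : Matrix n n ℂ} (hA : A.IsHermitian) :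
    (A * A).trace = ∑ j, ((hA.eigenvalues j : ℂ)) ^ 2 := by
  set U : Matrix n n ℂ := (Matrix.IsHermitian.eigenvectorUnitary hA : Matrix n n ℂ) with hU
  have hU2 : star U * U = 1 :=
    Matrix.mem_unitaryGroup_iff'.mp (Matrix.IsHermitian.eigenvectorUnitary hA).2
  set D : Matrix n n ℂ := Matrix.diagonal (RCLike.ofReal ∘ hA.eigenvalues) with hD
  have hAs : A = U * D * star U := hA.spectral_theorem
  have : A * A = U * (D * D) * star U := by
    rw [hAs]
    calc U * D * star U * (U * D * star U) = U * D * (star U * U) * D * star U := by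
          simp only [Matrix.mul_assoc]
      _ = U * (D * D) * star U := by rw [hU2, Matrix.mul_one]; simp only [Matrix.mul_assoc]
  rw [this, Matrix.trace_mul_cycle, hU2, one_mul, hD, Matrix.diagonal_mul_diagonal,
    Matrix.trace_diagonal]
  simp [pow_two]

lemma aux_trace_re_eq {A : Matrix n n ℂ} (hA : A.IsHermitian) :
    A.trace.re = ∑ j, hA.eigenvalues j := by
  have := congrArg Complex.re (aux_trace_eq hA)
  simpa [Complex.re_sum] using this

lemma aux_trace_sq_re_eq {A : Matrix n n ℂ} (hA : A.IsHermitian) :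
    (A * A).trace.re = ∑ j, (hA.eigenvalues j) ^ 2 := by
  have := congrArg Complex.re (aux_trace_sq hA)
  simpa [Complex.re_sum, ← Complex.ofReal_pow] using this

open scoped ComplexOrder in
lemma aux_psd_diag_nonneg {M : Matrix n n ℂ} (hM : M.PosSemidef) (a : n) :
    0 ≤ M a a := by
  have h := hM.dotProduct_mulVec_nonneg (Pi.single a 1)
  have e : dotProduct (star (Pi.single a 1)) (M *ᵥ Pi.single a 1) = M a a := by
    have h1 : M *ᵥ Pi.single a 1 = fun i => M i a := by
      ext i
      simp [Matrix.mulVec, dotProduct, Pi.single_apply, mul_ite, Finset.sum_ite_eq']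
    rw [h1]
    simp [dotProduct, Pi.star_apply, Pi.single_apply, apply_ite (star : ℂ → ℂ),
      ite_mul, Finset.sum_ite_eq]
  rwa [e] at h

lemma aux_psd_trace_re_nonneg {M : Matrix n n ℂ} (hM : M.PosSemidef) :
    0 ≤ M.trace.re := by
  rw [Matrix.trace, Complex.re_sum]
  refine Finset.sum_nonneg fun a _ => ?_
  exact (Complex.le_def.mp (aux_psd_diag_nonneg hM a)).1

lemma aux_psd_trace_coe {M : Matrix n n ℂ} (hM : M.PosSemidef) :
    M.trace = (M.trace.re : ℂ) := by
  apply Complex.ext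
  · simp
  · simp only [Complex.ofReal_im]
    rw [Matrix.trace]
    rw [Complex.im_sum]
    refine Finset.sum_eq_zero fun a _ => ?_
    have := (Complex.le_def.mp (aux_psd_diag_nonneg hM a)).2
    simpa using this.symm

lemma aux_psd_trace_zero {M : Matrix n n ℂ} (hM : M.PosSemidef) (h : M.trace.re = 0) :
    M = 0 := by
  obtain ⟨B, rfl⟩ := (Matrix.posSemidef_iff_eq_transpose_mul_self).mp hM
  have key : (Bᴴ * B).trace.re = ∑ j, ∑ i, Complex.normSq (B i j) := by
    rw [Matrix.trace, Complex.re_sum]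
    refine Finset.sum_congr rfl fun j _ => ?_
    rw [Matrix.diag_apply, Matrix.mul_apply, Complex.re_sum]
    refine Finset.sum_congr rfl fun i _ => ?_
    rw [Matrix.conjTranspose_apply]
    rw [show star (B i j) * B i j = ((Complex.normSq (B i j) : ℂ)) from
      (Complex.normSq_eq_conj_mul_self).symm ▸ rfl]
    simp
  rw [key] at h
  have hB : ∀ i j, B i j = 0 := by
    intro i j
    have h1 : ∀ j ∈ Finset.univ, (0:ℝ) ≤ ∑ i, Complex.normSq (B i j) :=
      fun j _ => Finset.sum_nonneg fun i _ => Complex.normSq_nonneg _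
    have h2 := (Finset.sum_eq_zero_iff_of_nonneg h1).mp h j (Finset.mem_univ j)
    have h3 := (Finset.sum_eq_zero_iff_of_nonneg
      (fun i _ => Complex.normSq_nonneg (B i j))).mp h2 i (Finset.mem_univ i)
    exact Complex.normSq_eq_zero.mp h3
  have : B = 0 := by ext i j; exact hB i j
  rw [this]
  simp

open scoped ComplexOrder in
lemma aux_psd_smul {M : Matrix n n ℂ} (hM : M.PosSemidef) {c : ℝ} (hc : 0 ≤ c) :
    (c • M).PosSemidef := by
  have hsm : c • M = (c : ℂ) • M := by
    ext i j; simp [Complex.real_smul]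
  rw [hsm]
  refine Matrix.PosSemidef.of_dotProduct_mulVec_nonneg ?_ ?_
  · rw [Matrix.IsHermitian, Matrix.conjTranspose_smul]
    rw [hM.1]
    congr 1
    simp [Complex.star_def, Complex.conj_ofReal]
  · intro x
    rw [Matrix.smul_mulVec, dotProduct_smul, smul_eq_mul]
    have h0 : (0:ℂ) ≤ (c:ℂ) := by
      rw [Complex.le_def]; simp [hc]
    exact mul_nonneg h0 (hM.dotProduct_mulVec_nonneg x)

end AuxSpec

namespace AuxConc

open Matrix AuxSpec

variable {n : Type*} [Fintype n] [DecidableEq n]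

lemma aux_re_star_mul_self (z : ℂ) : (star z * z).re = Complex.normSq z := by
  rw [Complex.star_def, ← Complex.normSq_eq_conj_mul_self, Complex.ofReal_re]

lemma aux_re_star_mul_smul (z : ℂ) (r : ℝ) :
    (star z * ((RCLike.ofReal r : ℂ) * z)).re = Complex.normSq z * r := by
  have h0 : (RCLike.ofReal r : ℂ) = (r : ℂ) := rfl
  rw [h0, Complex.star_def,
    show (starRingEnd ℂ) z * ((r : ℂ) * z) = (r : ℂ) * ((starRingEnd ℂ) z * z) by ring,
    ← Complex.normSq_eq_conj_mul_self, ← Complex.ofReal_mul, Complex.ofReal_re, mul_comm]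

/-- Schur: the entropy of the diagonal of a density matrix in any unitary frame
dominates the von Neumann entropy. -/
lemma aux_schur (ρ : Matrix n n ℂ) (hρ : IsDensity ρ) (V : Matrix n n ℂ)
    (hV1 : V * star V = 1) (hV2 : star V * V = 1) :
    vnEntropy ρ ≤ ∑ k, negxlog ((star V * ρ * V) k k).re := by
  have hH : ρ.IsHermitian := hρ.1.isHermitian
  set lam : n → ℝ := hH.eigenvalues with hlam
  set W : Matrix n n ℂ := (Matrix.IsHermitian.eigenvectorUnitary hH : Matrix n n ℂ) with hW
  have hW1 : W * star W = 1 :=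
    Matrix.mem_unitaryGroup_iff.mp (Matrix.IsHermitian.eigenvectorUnitary hH).2
  have hW2 : star W * W = 1 :=
    Matrix.mem_unitaryGroup_iff'.mp (Matrix.IsHermitian.eigenvectorUnitary hH).2
  set D : Matrix n n ℂ := Matrix.diagonal (RCLike.ofReal ∘ lam) with hD
  have hspec : ρ = W * D * star W := hH.spectral_theorem
  set U : Matrix n n ℂ := star W * V with hU
  have hsU : star U = star V * W := by rw [hU, Matrix.star_mul, star_star]
  have hU2 : star U * U = 1 := by
    rw [hsU, hU]
    calc star V * W * (star W * V) = star V * (W * star W) * V := by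
          simp only [Matrix.mul_assoc]
      _ = 1 := by rw [hW1, Matrix.mul_one, hV2]
  have hU1 : U * star U = 1 := by
    rw [hsU, hU]
    calc star W * V * (star V * W) = star W * (V * star V) * W := by
          simp only [Matrix.mul_assoc]
      _ = 1 := by rw [hV1, Matrix.mul_one, hW2]
  have key : star V * ρ * V = star U * D * U := by
    rw [hspec, hsU, hU]
    simp only [Matrix.mul_assoc]
  set w : n → n → ℝ := fun k j => Complex.normSq (U j k) with hw
  have entry : ∀ k, ((star V * ρ * V) k k).re = ∑ j, w k j * lam j := by
    intro k
    rw [key]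
    rw [Matrix.mul_assoc, Matrix.mul_apply, Complex.re_sum]
    refine Finset.sum_congr rfl fun j _ => ?_
    rw [Matrix.star_apply, Matrix.mul_apply]
    rw [Finset.sum_eq_single j]
    · rw [hD, Matrix.diagonal_apply_eq]
      simp only [Function.comp_apply]
      rw [aux_re_star_mul_smul]
    · intro b _ hb
      rw [hD, Matrix.diagonal_apply_ne' _ hb]
      simp
    · intro h; exact absurd (Finset.mem_univ j) h
  have rowsum : ∀ k, ∑ j, w k j = 1 := by
    intro k
    have h := congrArg (fun M : Matrix n n ℂ => (M k k).re) hU2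
    simp only [Matrix.mul_apply, Matrix.one_apply_eq] at h
    rw [Complex.re_sum] at h
    rw [← show (1:ℂ).re = 1 from rfl, ← h]
    refine Finset.sum_congr rfl fun j _ => ?_
    rw [Matrix.star_apply, aux_re_star_mul_self]
  have colsum : ∀ j, ∑ k, w k j = 1 := by
    intro j
    have h := congrArg (fun M : Matrix n n ℂ => (M j j).re) hU1
    simp only [Matrix.mul_apply, Matrix.one_apply_eq] at h
    rw [Complex.re_sum] at h
    rw [← show (1:ℂ).re = 1 from rfl, ← h]
    refine Finset.sum_congr rfl fun k _ => ?_
    rw [Matrix.star_apply, mul_comm, aux_re_star_mul_self]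
  have hlam_nonneg : ∀ j, 0 ≤ lam j := fun j => hρ.1.eigenvalues_nonneg j
  have hw_nonneg : ∀ k j, 0 ≤ w k j := fun k j => Complex.normSq_nonneg _
  have jensen : ∀ k, ∑ j, w k j * negxlog (lam j) ≤ negxlog (∑ j, w k j * lam j) := by
    intro k
    have := aux_negxlog_concave.le_map_sum (t := Finset.univ) (w := w k) (p := lam)
      (fun j _ => hw_nonneg k j) (rowsum k) (fun j _ => hlam_nonneg j)
    simpa [smul_eq_mul] using this
  calc vnEntropy ρ = ∑ j, negxlog (lam j) := aux_vnEntropy_eq hH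
    _ = ∑ j, (∑ k, w k j) * negxlog (lam j) := by
        refine Finset.sum_congr rfl fun j _ => ?_
        rw [colsum j, one_mul]
    _ = ∑ k, ∑ j, w k j * negxlog (lam j) := by
        rw [Finset.sum_comm]
        simp [Finset.sum_mul]
    _ ≤ ∑ k, negxlog (∑ j, w k j * lam j) := Finset.sum_le_sum fun k _ => jensen k
    _ = ∑ k, negxlog ((star V * ρ * V) k k).re := by
        refine Finset.sum_congr rfl fun k _ => ?_
        rw [entry k]

/-- Concavity of von Neumann entropy on density matrices. -/
lemma aux_vnEntropy_concave (ρ1 ρ2 : Matrix n n ℂ) (h1 : IsDensity ρ1) (h2 : IsDensity ρ2)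
    {t : ℝ} (ht0 : 0 ≤ t) (ht1 : t ≤ 1) :
    t * vnEntropy ρ1 + (1 - t) * vnEntropy ρ2 ≤ vnEntropy (t • ρ1 + (1 - t) • ρ2) := by
  have ht0' : (0:ℝ) ≤ 1 - t := by linarith
  set σ : Matrix n n ℂ := t • ρ1 + (1 - t) • ρ2 with hσdef
  have hσpsd : σ.PosSemidef := (aux_psd_smul h1.1 ht0).add (aux_psd_smul h2.1 ht0')
  have hσH : σ.IsHermitian := hσpsd.isHermitian
  set V : Matrix n n ℂ := (Matrix.IsHermitian.eigenvectorUnitary hσH : Matrix n n ℂ) with hV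
  have hV1 : V * star V = 1 :=
    Matrix.mem_unitaryGroup_iff.mp (Matrix.IsHermitian.eigenvectorUnitary hσH).2
  have hV2 : star V * V = 1 :=
    Matrix.mem_unitaryGroup_iff'.mp (Matrix.IsHermitian.eigenvectorUnitary hσH).2
  have hdiag : star V * σ * V = Matrix.diagonal (RCLike.ofReal ∘ hσH.eigenvalues) :=
    by
      conv_lhs => rw [hσH.spectral_theorem, Unitary.conjStarAlgAut_apply]
      rw [← hV]
      rw [show star V * (V * Matrix.diagonal (RCLike.ofReal ∘ hσH.eigenvalues) * star V) * V
          = (star V * V) * Matrix.diagonal (RCLike.ofReal ∘ hσH.eigenvalues) * (star V * V) by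
            simp only [Matrix.mul_assoc], hV2, Matrix.one_mul, Matrix.mul_one]
  set q1 : n → ℝ := fun k => ((star V * ρ1 * V) k k).re with hq1
  set q2 : n → ℝ := fun k => ((star V * ρ2 * V) k k).re with hq2
  have hdecomp : ∀ k, hσH.eigenvalues k = t * q1 k + (1 - t) * q2 k := by
    intro k
    have h := congrArg (fun M : Matrix n n ℂ => (M k k).re) hdiag
    try simp only at h
    rw [Matrix.diagonal_apply_eq] at h
    simp only [Function.comp_apply] at h
    have hre : ((RCLike.ofReal (hσH.eigenvalues k) : ℂ)).re = hσH.eigenvalues k := rfl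
    rw [hre] at h
    rw [← h, hσdef]
    have hmm : star V * (t • ρ1 + (1 - t) • ρ2) * V
        = t • (star V * ρ1 * V) + (1 - t) • (star V * ρ2 * V) := by
      rw [Matrix.mul_add, Matrix.add_mul]
      congr 1
      · rw [Matrix.mul_smul, Matrix.smul_mul]
      · rw [Matrix.mul_smul, Matrix.smul_mul]
    rw [hmm]
    simp [Complex.add_re, Complex.real_smul, Complex.mul_re, hq1, hq2]
  have hq1_nonneg : ∀ k, 0 ≤ q1 k := by
    intro k
    have := aux_psd_diag_nonneg
      (Matrix.PosSemidef.conjTranspose_mul_mul_same h1.1 V) k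
    rw [← Matrix.star_eq_conjTranspose] at this
    exact (Complex.le_def.mp this).1
  have hq2_nonneg : ∀ k, 0 ≤ q2 k := by
    intro k
    have := aux_psd_diag_nonneg
      (Matrix.PosSemidef.conjTranspose_mul_mul_same h2.1 V) k
    rw [← Matrix.star_eq_conjTranspose] at this
    exact (Complex.le_def.mp this).1
  have pointwise : ∀ k, t * negxlog (q1 k) + (1 - t) * negxlog (q2 k)
      ≤ negxlog (hσH.eigenvalues k) := by
    intro k
    have := aux_negxlog_concave.2 (hq1_nonneg k) (hq2_nonneg k) ht0 ht0' (by ring)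
    rw [hdecomp k]
    simpa [smul_eq_mul] using this
  calc t * vnEntropy ρ1 + (1 - t) * vnEntropy ρ2
      ≤ t * (∑ k, negxlog (q1 k)) + (1 - t) * (∑ k, negxlog (q2 k)) := by
        have s1 := aux_schur ρ1 h1 V hV1 hV2
        have s2 := aux_schur ρ2 h2 V hV1 hV2
        gcongr
    _ = ∑ k, (t * negxlog (q1 k) + (1 - t) * negxlog (q2 k)) := by
        rw [Finset.sum_add_distrib, Finset.mul_sum, Finset.mul_sum]
    _ ≤ ∑ k, negxlog (hσH.eigenvalues k) := Finset.sum_le_sum fun k _ => pointwise k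
    _ = vnEntropy σ := (aux_vnEntropy_eq hσH).symm

end AuxConc

noncomputable section AuxTrB

open Matrix AuxSpec AuxConc
open scoped Kronecker ComplexOrder

variable {α β : Type*} [Fintype α] [Fintype β] [DecidableEq α] [DecidableEq β]

lemma aux_smul_re (t : ℝ) (z : ℂ) : (t • z).re = t * z.re := by
  rw [Complex.real_smul, Complex.mul_re]; simp

lemma aux_trB_add (Y Z : Matrix (α × β) (α × β) ℂ) : trB (Y + Z) = trB Y + trB Z := by
  ext i j; simp [trB, Finset.sum_add_distrib]

lemma aux_trB_smul {R : Type*} [DistribSMul R ℂ] (c : R) (Y : Matrix (α × β) (α × β) ℂ) :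
    trB (c • Y) = c • trB Y := by
  ext i j; simp [trB, Finset.smul_sum]

lemma aux_trB_conjTranspose (Y : Matrix (α × β) (α × β) ℂ) :
    (trB Y)ᴴ = trB (Yᴴ) := by
  ext i j
  simp [trB, Matrix.conjTranspose_apply, map_sum]

lemma aux_trB_cyc (Y : Matrix (α × β) (α × β) ℂ) (C : Matrix β β ℂ) :
    trB (Y * ((1 : Matrix α α ℂ) ⊗ₖ C)) = trB (((1 : Matrix α α ℂ) ⊗ₖ C) * Y) := by
  ext i j
  show ∑ k, (Y * ((1 : Matrix α α ℂ) ⊗ₖ C)) (i, k) (j, k)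
      = ∑ k, (((1 : Matrix α α ℂ) ⊗ₖ C) * Y) (i, k) (j, k)
  have lhs : ∀ k, (Y * ((1 : Matrix α α ℂ) ⊗ₖ C)) (i, k) (j, k)
      = ∑ q, Y (i, k) (j, q) * C q k := by
    intro k
    rw [Matrix.mul_apply, Fintype.sum_prod_type, Finset.sum_comm]
    rw [Finset.sum_congr rfl (fun q (_ : q ∈ Finset.univ) => Finset.sum_eq_single j
      (fun p _ hp => by simp [Matrix.kroneckerMap_apply, Matrix.one_apply, hp])
      (fun h => absurd (Finset.mem_univ j) h))]
    refine Finset.sum_congr rfl fun q _ => ?_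
    simp [Matrix.kroneckerMap_apply, Matrix.one_apply]
  have rhs : ∀ k, (((1 : Matrix α α ℂ) ⊗ₖ C) * Y) (i, k) (j, k)
      = ∑ q, C k q * Y (i, q) (j, k) := by
    intro k
    rw [Matrix.mul_apply, Fintype.sum_prod_type]
    rw [Finset.sum_eq_single i (fun p _ hp => Finset.sum_eq_zero fun q _ => by
      simp [Matrix.kroneckerMap_apply, Matrix.one_apply, Ne.symm hp])
      (fun h => absurd (Finset.mem_univ i) h)]
    refine Finset.sum_congr rfl fun q _ => ?_
    simp [Matrix.kroneckerMap_apply, Matrix.one_apply]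
  calc ∑ k, (Y * ((1 : Matrix α α ℂ) ⊗ₖ C)) (i, k) (j, k)
      = ∑ k, ∑ q, Y (i, k) (j, q) * C q k := Finset.sum_congr rfl fun k _ => lhs k
    _ = ∑ q, ∑ k, Y (i, k) (j, q) * C q k := Finset.sum_comm
    _ = ∑ k, ∑ q, C k q * Y (i, q) (j, k) := by
        refine Finset.sum_congr rfl fun q _ => ?_
        refine Finset.sum_congr rfl fun k _ => ?_
        ring
    _ = ∑ k, (((1 : Matrix α α ℂ) ⊗ₖ C) * Y) (i, k) (j, k) :=
        Finset.sum_congr rfl fun k _ => (rhs k).symm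

lemma aux_kron_one_herm {C : Matrix β β ℂ} (hC : C.IsHermitian) :
    ((1 : Matrix α α ℂ) ⊗ₖ C).IsHermitian := by
  show ((1 : Matrix α α ℂ) ⊗ₖ C)ᴴ = (1 : Matrix α α ℂ) ⊗ₖ C
  ext ⟨i, k⟩ ⟨j, l⟩
  have hckl : (starRingEnd ℂ) (C l k) = C k l := by
    have := congrFun (congrFun hC k) l
    simpa [Matrix.conjTranspose_apply] using this
  simp [Matrix.conjTranspose_apply, Matrix.kroneckerMap_apply, Matrix.one_apply, apply_ite,
    hckl, mul_comm]
  by_cases h : i = j <;> simp [h, eq_comm]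

lemma aux_trB_psd {Z : Matrix (α × β) (α × β) ℂ} (hZ : Z.PosSemidef) :
    (trB Z).PosSemidef := by
  refine Matrix.PosSemidef.of_dotProduct_mulVec_nonneg ?_ ?_
  · show (trB Z)ᴴ = trB Z
    rw [aux_trB_conjTranspose, hZ.1]
  · intro x
    set y : β → ((α × β) → ℂ) := fun k p => if p.2 = k then x p.1 else 0 with hy
    have rhs : ∀ k, dotProduct (star (y k)) (Z *ᵥ (y k))
        = ∑ i, ∑ j, star (x i) * (Z (i, k) (j, k) * x j) := by
      intro k
      rw [dotProduct, Fintype.sum_prod_type]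
      refine Finset.sum_congr rfl fun i _ => ?_
      rw [Finset.sum_eq_single k (fun b _ hb => by simp [hy, hb])
        (fun h => absurd (Finset.mem_univ k) h)]
      have h1 : y k (i, k) = x i := by simp [hy]
      have h2 : (Z *ᵥ y k) (i, k) = ∑ j, Z (i, k) (j, k) * x j := by
        rw [Matrix.mulVec, dotProduct, Fintype.sum_prod_type]
        refine Finset.sum_congr rfl fun j _ => ?_
        rw [Finset.sum_eq_single k (fun c _ hc => by simp [hy, hc])
          (fun h => absurd (Finset.mem_univ k) h)]
        simp [hy]
      rw [Pi.star_apply, h1, h2, Finset.mul_sum]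
    have lhs : dotProduct (star x) (trB Z *ᵥ x)
        = ∑ k, ∑ i, ∑ j, star (x i) * (Z (i, k) (j, k) * x j) := by
      rw [dotProduct]
      calc ∑ i, (star x) i * (trB Z *ᵥ x) i
          = ∑ i, ∑ j, ∑ k, star (x i) * (Z (i, k) (j, k) * x j) := by
            refine Finset.sum_congr rfl fun i _ => ?_
            rw [Matrix.mulVec, dotProduct, Finset.mul_sum]
            refine Finset.sum_congr rfl fun j _ => ?_
            rw [Pi.star_apply]
            have htb : trB Z i j = ∑ k, Z (i, k) (j, k) := rfl
            rw [htb, Finset.sum_mul, Finset.mul_sum]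
        _ = ∑ i, ∑ k, ∑ j, star (x i) * (Z (i, k) (j, k) * x j) :=
            Finset.sum_congr rfl fun i _ => Finset.sum_comm
        _ = ∑ k, ∑ i, ∑ j, star (x i) * (Z (i, k) (j, k) * x j) := Finset.sum_comm
    rw [lhs]
    rw [show (∑ k, ∑ i, ∑ j, star (x i) * (Z (i, k) (j, k) * x j))
      = ∑ k, dotProduct (star (y k)) (Z *ᵥ (y k)) from
      Finset.sum_congr rfl fun k _ => (rhs k).symm]
    exact Finset.sum_nonneg fun k _ => hZ.dotProduct_mulVec_nonneg (y k)

/-- The unnormalized conditional operator is positive semidefinite. -/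
lemma aux_X_psd {ρ : Matrix (α × β) (α × β) ℂ} (hρ : ρ.PosSemidef)
    {M : Matrix β β ℂ} (hM : M.PosSemidef) :
    (trB (ρ * ((1 : Matrix α α ℂ) ⊗ₖ M))).PosSemidef := by
  set s : Matrix β β ℂ := hM.sqrt with hs
  set B : Matrix (α × β) (α × β) ℂ := (1 : Matrix α α ℂ) ⊗ₖ s with hB
  have hBh : B.IsHermitian := aux_kron_one_herm hM.posSemidef_sqrt.isHermitian
  have hBB : B * B = (1 : Matrix α α ℂ) ⊗ₖ M := by
    rw [hB, ← Matrix.mul_kronecker_mul, Matrix.one_mul, hM.sqrt_mul_self]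
  have key : trB (ρ * ((1 : Matrix α α ℂ) ⊗ₖ M)) = trB (B * ρ * B) := by
    rw [← hBB, ← Matrix.mul_assoc, aux_trB_cyc (ρ * B) s]
    rw [← hB, ← Matrix.mul_assoc]
  rw [key]
  refine aux_trB_psd ?_
  have := Matrix.PosSemidef.conjTranspose_mul_mul_same hρ B
  rwa [hBh.eq] at this

/-- Linearity of the unnormalized conditional operator in the POVM element. -/
lemma aux_X_lin (ρ : Matrix (α × β) (α × β) ℂ) (M N : Matrix β β ℂ) (t u : ℝ) :
    trB (ρ * ((1 : Matrix α α ℂ) ⊗ₖ (t • M + u • N)))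
      = t • trB (ρ * ((1 : Matrix α α ℂ) ⊗ₖ M)) + u • trB (ρ * ((1 : Matrix α α ℂ) ⊗ₖ N)) := by
  have hk : (1 : Matrix α α ℂ) ⊗ₖ (t • M + u • N)
      = t • ((1 : Matrix α α ℂ) ⊗ₖ M) + u • ((1 : Matrix α α ℂ) ⊗ₖ N) := by
    rw [Matrix.kronecker_add, Matrix.kronecker_smul, Matrix.kronecker_smul]
  rw [hk, Matrix.mul_add, Matrix.mul_smul, Matrix.mul_smul, aux_trB_add,
    aux_trB_smul, aux_trB_smul]

/-- Unnormalized entropy functional. -/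
def gval {n : Type*} [Fintype n] [DecidableEq n] (X : Matrix n n ℂ) : ℝ :=
  X.trace.re * vnEntropy (X.trace.re⁻¹ • X)

lemma aux_povmMCE_eq {ι : Type*} [Fintype ι] (ρ : Matrix (α × β) (α × β) ℂ)
    (M : ι → Matrix β β ℂ) :
    povmMCE ρ M = ∑ i, gval (trB (ρ * ((1 : Matrix α α ℂ) ⊗ₖ M i))) := rfl

lemma aux_density_normalize {n : Type*} [Fintype n] [DecidableEq n]
    {X : Matrix n n ℂ} (hX : X.PosSemidef) (hp : 0 < X.trace.re) :
    IsDensity (X.trace.re⁻¹ • X) := by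
  refine ⟨aux_psd_smul hX (inv_nonneg.mpr hp.le), ?_⟩
  rw [Matrix.trace_smul, aux_psd_trace_coe hX]
  simp only [Complex.ofReal_re]
  rw [Complex.real_smul, ← Complex.ofReal_mul, inv_mul_cancel₀ hp.ne']
  simp

lemma aux_gval_smul {n : Type*} [Fintype n] [DecidableEq n]
    {X : Matrix n n ℂ} (hX : X.PosSemidef) {c : ℝ} (hc : 0 < c) :
    gval (c • X) = c * gval X := by
  by_cases hz : X.trace.re = 0
  · have : X = 0 := aux_psd_trace_zero hX hz
    subst this
    simp [gval]
  · have hp : 0 < X.trace.re := lt_of_le_of_ne (aux_psd_trace_re_nonneg hX) (Ne.symm hz)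
    have htr : (c • X).trace.re = c * X.trace.re := by
      rw [Matrix.trace_smul, aux_smul_re]
    have hnorm : (c * X.trace.re)⁻¹ • (c • X) = X.trace.re⁻¹ • X := by
      rw [smul_smul]
      congr 1
      field_simp
    rw [gval, htr, hnorm, gval]
    ring

/-- Concavity of the unnormalized entropy functional along convex combinations. -/
lemma aux_gval_combo {n : Type*} [Fintype n] [DecidableEq n]
    {X Y : Matrix n n ℂ} (hX : X.PosSemidef) (hY : Y.PosSemidef)
    {t : ℝ} (ht0 : 0 ≤ t) (ht1 : t ≤ 1) :
    t * gval X + (1 - t) * gval Y ≤ gval (t • X + (1 - t) • Y) := by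
  rcases eq_or_lt_of_le ht0 with h0 | htpos
  · rw [← h0]; simp
  rcases eq_or_lt_of_le ht1 with h1 | htlt
  · rw [h1]; simp
  have ht0' : (0:ℝ) < 1 - t := by linarith
  set a : ℝ := X.trace.re with ha
  set b : ℝ := Y.trace.re with hb
  have ha0 : 0 ≤ a := aux_psd_trace_re_nonneg hX
  have hb0 : 0 ≤ b := aux_psd_trace_re_nonneg hY
  by_cases haz : a = 0
  · have hX0 : X = 0 := aux_psd_trace_zero hX haz
    subst hX0
    rw [smul_zero, zero_add]
    have h1 : gval (0 : Matrix n n ℂ) = 0 := by simp [gval]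
    rw [h1, mul_zero, zero_add, aux_gval_smul hY ht0']
  by_cases hbz : b = 0
  · have hY0 : Y = 0 := aux_psd_trace_zero hY hbz
    subst hY0
    rw [smul_zero, add_zero]
    have h1 : gval (0 : Matrix n n ℂ) = 0 := by simp [gval]
    rw [h1, mul_zero, add_zero, aux_gval_smul hX htpos]
  have hapos : 0 < a := lt_of_le_of_ne ha0 (Ne.symm haz)
  have hbpos : 0 < b := lt_of_le_of_ne hb0 (Ne.symm hbz)
  set c : ℝ := t * a + (1 - t) * b with hc
  have hcpos : 0 < c := by positivity
  set s : ℝ := t * a / c with hsdef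
  have hs0 : 0 ≤ s := by positivity
  have hs1 : s ≤ 1 := by
    rw [hsdef, div_le_one hcpos, hc]
    nlinarith
  have h1s : 1 - s = (1 - t) * b / c := by
    rw [hsdef]
    field_simp
    ring
  set ρ1 : Matrix n n ℂ := a⁻¹ • X with hρ1
  set ρ2 : Matrix n n ℂ := b⁻¹ • Y with hρ2
  have hd1 : IsDensity ρ1 := aux_density_normalize hX hapos
  have hd2 : IsDensity ρ2 := aux_density_normalize hY hbpos
  have hcomb : s • ρ1 + (1 - s) • ρ2 = c⁻¹ • (t • X + (1 - t) • Y) := by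
    rw [hρ1, hρ2, smul_smul, smul_smul, smul_add, smul_smul, smul_smul]
    congr 1
    · congr 1
      rw [hsdef]
      field_simp
      try ring
    · congr 1
      rw [h1s]
      field_simp
      try ring
  have hconc := aux_vnEntropy_concave ρ1 ρ2 hd1 hd2 hs0 hs1
  rw [hcomb] at hconc
  have htrc : (t • X + (1 - t) • Y).trace.re = c := by
    rw [Matrix.trace_add, Matrix.trace_smul, Matrix.trace_smul, Complex.add_re,
      aux_smul_re, aux_smul_re, hc, ha, hb]
  have hmul := mul_le_mul_of_nonneg_left hconc hcpos.le
  have hgc : gval (t • X + (1 - t) • Y) = c * vnEntropy (c⁻¹ • (t • X + (1 - t) • Y)) := by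
    rw [gval, htrc]
  rw [hgc]
  have hgs : c * (s * vnEntropy ρ1 + (1 - s) * vnEntropy ρ2)
      = t * gval X + (1 - t) * gval Y := by
    have e1 : c * s = t * a := by
      rw [hsdef]; field_simp; try ring
    have e2 : c * (1 - s) = (1 - t) * b := by
      rw [h1s]; field_simp; try ring
    have : c * (s * vnEntropy ρ1 + (1 - s) * vnEntropy ρ2)
        = (c * s) * vnEntropy ρ1 + (c * (1 - s)) * vnEntropy ρ2 := by ring
    rw [this, e1, e2, gval, gval, ← ha, ← hb, ← hρ1, ← hρ2]
    ring
  rw [hgs] at hmul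
  exact hmul

/-- Part 1: concavity of the measured conditional entropy on POVMs. -/
lemma aux_part1 {ι : Type*} [Fintype ι] (ρ : Matrix (α × β) (α × β) ℂ) (hρ : IsDensity ρ)
    (M N : ι → Matrix β β ℂ) (hM : IsPOVM M) (hN : IsPOVM N)
    (t : ℝ) (ht0 : 0 ≤ t) (ht1 : t ≤ 1) :
    t * povmMCE ρ M + (1 - t) * povmMCE ρ N ≤
      povmMCE ρ (fun i => t • M i + (1 - t) • N i) := by
  rw [aux_povmMCE_eq, aux_povmMCE_eq, aux_povmMCE_eq]
  calc t * ∑ i, gval (trB (ρ * ((1 : Matrix α α ℂ) ⊗ₖ M i)))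
        + (1 - t) * ∑ i, gval (trB (ρ * ((1 : Matrix α α ℂ) ⊗ₖ N i)))
      = ∑ i, (t * gval (trB (ρ * ((1 : Matrix α α ℂ) ⊗ₖ M i)))
        + (1 - t) * gval (trB (ρ * ((1 : Matrix α α ℂ) ⊗ₖ N i)))) := by
        rw [Finset.sum_add_distrib, Finset.mul_sum, Finset.mul_sum]
    _ ≤ ∑ i, gval (trB (ρ * ((1 : Matrix α α ℂ) ⊗ₖ (t • M i + (1 - t) • N i)))) := by
        refine Finset.sum_le_sum fun i _ => ?_
        rw [aux_X_lin]
        exact aux_gval_combo (aux_X_psd hρ.1 (hM.1 i)) (aux_X_psd hρ.1 (hN.1 i)) ht0 ht1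

end AuxTrB

noncomputable section AuxCont

open Matrix AuxSpec AuxConc Filter
open scoped Kronecker ComplexOrder Topology

variable {n : Type*} [Fintype n] [DecidableEq n]

lemma aux_prod_cast (r : n → ℝ) (t : ℝ) :
    ∏ j, ((t : ℂ) - (r j : ℂ)) = ((∏ j, (t - r j) : ℝ) : ℂ) := by
  rw [Complex.ofReal_prod]
  exact Finset.prod_congr rfl fun j _ => by push_cast; ring

lemma aux_vnEntropy_eq_of_prod {B : Matrix n n ℂ} (hB : B.IsHermitian) (μ : n → ℝ)
    (h : ∀ t : ℝ, ∏ j, (t - hB.eigenvalues j) = ∏ j, (t - μ j)) :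
    vnEntropy B = ∑ j, negxlog (μ j) := by
  rw [aux_vnEntropy_eq hB]
  exact aux_sum_eq_of_prod_eq _ _ negxlog h

lemma aux_real_smul_matrix (r : ℝ) (A : Matrix n n ℂ) : r • A = (r : ℂ) • A := by
  ext i j; simp [Complex.real_smul]

lemma aux_vnEntropy_zero : vnEntropy (0 : Matrix n n ℂ) = 0 := by
  have h0 : (0 : Matrix n n ℂ).PosSemidef := Matrix.PosSemidef.zero
  rw [aux_vnEntropy_eq h0.isHermitian]
  have hsum : ∑ j, h0.isHermitian.eigenvalues j = 0 := by
    rw [← aux_trace_re_eq h0.isHermitian]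
    simp
  have hz : ∀ j ∈ Finset.univ, h0.isHermitian.eigenvalues j = 0 :=
    (Finset.sum_eq_zero_iff_of_nonneg fun j _ => h0.eigenvalues_nonneg j).mp hsum
  refine Finset.sum_eq_zero fun j _ => ?_
  rw [hz j (Finset.mem_univ j)]
  simp [negxlog]

lemma aux_negxlog_zero : negxlog 0 = 0 := by simp [negxlog]

lemma aux_pxlog {l p : ℝ} (hl : 0 ≤ l) (hp : 0 < p) :
    p * negxlog (p⁻¹ * l) = negxlog l + l * Real.logb 2 p := by
  rcases eq_or_lt_of_le hl with h0 | hlpos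
  · rw [← h0]; simp [negxlog]
  · have hlog : Real.logb 2 (p⁻¹ * l) = -Real.logb 2 p + Real.logb 2 l := by
      rw [Real.logb_mul (inv_ne_zero hp.ne') hlpos.ne', Real.logb_inv]
    rw [negxlog, negxlog, hlog]
    field_simp
    ring

/-- Key identity: `gval X = S(X) - negxlog (tr X)` for `X` positive semidefinite. -/
lemma aux_gid {X : Matrix n n ℂ} (hX : X.PosSemidef) :
    gval X = vnEntropy X - negxlog X.trace.re := by
  by_cases hz : X.trace.re = 0
  · have hX0 : X = 0 := aux_psd_trace_zero hX hz
    subst hX0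
    simp [gval, aux_vnEntropy_zero, aux_negxlog_zero]
  have hp : 0 < X.trace.re := lt_of_le_of_ne (aux_psd_trace_re_nonneg hX) (Ne.symm hz)
  set p : ℝ := X.trace.re with hpdef
  set lam : n → ℝ := hX.isHermitian.eigenvalues with hlam
  set Y : Matrix n n ℂ := p⁻¹ • X with hY
  have hYpsd : Y.PosSemidef := aux_psd_smul hX (inv_nonneg.mpr hp.le)
  have hprod : ∀ t : ℝ, ∏ j, (t - hYpsd.isHermitian.eigenvalues j)
      = ∏ j, (t - p⁻¹ * lam j) := by
    intro t
    have hdY := aux_specdet hYpsd.isHermitian t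
    have hdX := aux_specdet hX.isHermitian (p * t)
    have hmat : (t : ℂ) • (1 : Matrix n n ℂ) - Y
        = ((p⁻¹ : ℝ) : ℂ) • (((p * t : ℝ) : ℂ) • (1 : Matrix n n ℂ) - X) := by
      rw [smul_sub, smul_smul, hY, aux_real_smul_matrix]
      congr 2
      push_cast
      field_simp
    have hdet : Matrix.det ((t : ℂ) • (1 : Matrix n n ℂ) - Y)
        = ((p⁻¹ : ℝ) : ℂ) ^ Fintype.card n
          * Matrix.det (((p * t : ℝ) : ℂ) • (1 : Matrix n n ℂ) - X) := by
      rw [hmat, Matrix.det_smul]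
    have hrhs : ((p⁻¹ : ℝ) : ℂ) ^ Fintype.card n * ∏ j, (((p * t : ℝ) : ℂ) - (lam j : ℂ))
        = ∏ j, ((t : ℂ) - ((p⁻¹ * lam j : ℝ) : ℂ)) := by
      rw [← Finset.card_univ, ← Finset.prod_const ((p⁻¹ : ℝ) : ℂ), ← Finset.prod_mul_distrib]
      refine Finset.prod_congr rfl fun j _ => ?_
      push_cast
      field_simp
    have hchain : ∏ j, ((t : ℂ) - (hYpsd.isHermitian.eigenvalues j : ℂ))
        = ∏ j, ((t : ℂ) - ((p⁻¹ * lam j : ℝ) : ℂ)) := by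
      rw [← hdY, hdet, hdX, hrhs]
    rw [aux_prod_cast, aux_prod_cast] at hchain
    exact_mod_cast hchain
  have hvnY : vnEntropy Y = ∑ j, negxlog (p⁻¹ * lam j) :=
    aux_vnEntropy_eq_of_prod hYpsd.isHermitian _ hprod
  have hsumlam : ∑ j, lam j = p := (aux_trace_re_eq hX.isHermitian).symm
  have hlam_nonneg : ∀ j, 0 ≤ lam j := fun j => hX.eigenvalues_nonneg j
  have harith : p * ∑ j, negxlog (p⁻¹ * lam j)
      = (∑ j, negxlog (lam j)) - negxlog p := by
    rw [Finset.mul_sum]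
    rw [Finset.sum_congr rfl fun j _ => aux_pxlog (hlam_nonneg j) hp]
    rw [Finset.sum_add_distrib, ← Finset.sum_mul, hsumlam]
    rw [negxlog]
    ring
  rw [gval, ← hpdef, ← hY, hvnY, harith, aux_vnEntropy_eq hX.isHermitian, ← hlam]

/-- Sequential continuity of the von Neumann entropy along Hermitian matrices. -/
lemma aux_vnEntropy_seq (A : ℕ → Matrix n n ℂ) (L : Matrix n n ℂ)
    (hA : ∀ m, (A m).IsHermitian) (hL : L.IsHermitian)
    (h : Tendsto A atTop (𝓝 L)) :
    Tendsto (fun m => vnEntropy (A m)) atTop (𝓝 (vnEntropy L)) := by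
  apply Filter.tendsto_of_subseq_tendsto
  intro ns hns
  set lam : ℕ → (n → ℝ) := fun m => (hA (ns m)).eigenvalues with hlamdef
  have hAns : Tendsto (fun m => A (ns m)) atTop (𝓝 L) := h.comp hns
  -- boundedness of eigenvalues
  have hsqcont : Continuous (fun B : Matrix n n ℂ => ((B * B).trace).re) :=
    Complex.continuous_re.comp ((Continuous.matrix_mul continuous_id continuous_id).matrix_trace)
  have htr : Tendsto (fun m => ((A (ns m)) * (A (ns m))).trace.re) atTop
      (𝓝 (((L * L)).trace.re)) := (hsqcont.tendsto L).comp hAns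
  obtain ⟨C, hC⟩ := htr.bddAbove_range
  have hbound : ∀ m j, |lam m j| ≤ Real.sqrt C := by
    intro m j
    have h1 : (lam m j) ^ 2 ≤ ∑ j', (lam m j') ^ 2 :=
      Finset.single_le_sum (f := fun j' => (lam m j') ^ 2) (fun j' _ => sq_nonneg _)
        (Finset.mem_univ j)
    have h2 : ∑ j', (lam m j') ^ 2 = ((A (ns m)) * (A (ns m))).trace.re :=
      (aux_trace_sq_re_eq (hA (ns m))).symm
    have h3 : ((A (ns m)) * (A (ns m))).trace.re ≤ C := hC ⟨m, rfl⟩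
    calc |lam m j| = Real.sqrt ((lam m j) ^ 2) := (Real.sqrt_sq_eq_abs _).symm
      _ ≤ Real.sqrt C := Real.sqrt_le_sqrt (by linarith)
  -- Bolzano-Weierstrass
  have hmem : ∀ m, lam m ∈ Metric.closedBall (0 : n → ℝ) (Real.sqrt C ⊔ 0) := by
    intro m
    rw [Metric.mem_closedBall, dist_zero_right]
    refine pi_norm_le_iff_of_nonneg (le_max_right _ _) |>.mpr fun j => ?_
    rw [Real.norm_eq_abs]
    exact le_trans (hbound m j) (le_max_left _ _)
  obtain ⟨μ, -, φ, hφmono, hμ⟩ :=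
    tendsto_subseq_of_bounded Metric.isBounded_closedBall hmem
  refine ⟨φ, ?_⟩
  have hAφ : Tendsto (fun m => A (ns (φ m))) atTop (𝓝 L) :=
    hAns.comp hφmono.tendsto_atTop
  -- identification of the limit eigenvalues
  have hdetL : ∀ t : ℝ, ∏ j, (t - μ j) = ∏ j, (t - hL.eigenvalues j) := by
    intro t
    have hGcont : Continuous (fun B : Matrix n n ℂ =>
        Matrix.det ((t : ℂ) • (1 : Matrix n n ℂ) - B)) := by
      apply Continuous.matrix_det
      exact continuous_const.sub continuous_id
    have h1 : Tendsto (fun m => Matrix.det ((t : ℂ) • (1 : Matrix n n ℂ) - A (ns (φ m))))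
        atTop (𝓝 (Matrix.det ((t : ℂ) • (1 : Matrix n n ℂ) - L))) :=
      (hGcont.tendsto L).comp hAφ
    have h2 : ∀ m, Matrix.det ((t : ℂ) • (1 : Matrix n n ℂ) - A (ns (φ m)))
        = ((∏ j, (t - lam (φ m) j) : ℝ) : ℂ) := by
      intro m
      rw [aux_specdet (hA (ns (φ m))) t, aux_prod_cast]
    have h3 : Tendsto (fun m => ((∏ j, (t - lam (φ m) j) : ℝ) : ℂ)) atTop
        (𝓝 ((∏ j, (t - μ j) : ℝ) : ℂ)) := by
      apply Complex.continuous_ofReal.continuousAt.tendsto.comp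
      apply tendsto_finset_prod
      intro j _
      exact (continuous_const.sub continuous_id).continuousAt.tendsto.comp
        (((continuous_apply j).tendsto μ).comp hμ)
    have h1' : Tendsto (fun m => ((∏ j, (t - lam (φ m) j) : ℝ) : ℂ)) atTop
        (𝓝 (Matrix.det ((t : ℂ) • (1 : Matrix n n ℂ) - L))) := by
      rw [show (fun m => ((∏ j, (t - lam (φ m) j) : ℝ) : ℂ))
        = fun m => Matrix.det ((t : ℂ) • (1 : Matrix n n ℂ) - A (ns (φ m))) from
        funext fun m => (h2 m).symm]
      exact h1
    have huniq := tendsto_nhds_unique h1' h3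
    have hLdet : Matrix.det ((t : ℂ) • (1 : Matrix n n ℂ) - L)
        = ((∏ j, (t - hL.eigenvalues j) : ℝ) : ℂ) := by
      rw [aux_specdet hL t, aux_prod_cast]
    rw [hLdet] at huniq
    exact_mod_cast huniq.symm
  have hid : ∑ j, negxlog (μ j) = vnEntropy L :=
    (aux_vnEntropy_eq_of_prod hL μ (fun t => (hdetL t).symm)).symm
  have heig : ∀ m, vnEntropy (A (ns (φ m))) = ∑ j, negxlog (lam (φ m) j) :=
    fun m => aux_vnEntropy_eq (hA (ns (φ m)))
  have hcont : Tendsto (fun m => ∑ j, negxlog (lam (φ m) j)) atTop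
      (𝓝 (∑ j, negxlog (μ j))) := by
    apply tendsto_finset_sum
    intro j _
    exact (aux_negxlog_continuous.tendsto _).comp (((continuous_apply j).tendsto μ).comp hμ)
  rw [show (fun m => vnEntropy (A (ns (φ m))))
    = fun m => ∑ j, negxlog (lam (φ m) j) from funext heig, ← hid]
  exact hcont

/-- Continuity of `vnEntropy ∘ F` for a continuous Hermitian-valued family. -/
lemma aux_vn_comp_continuous {Γ : Type*} [TopologicalSpace Γ]
    [FirstCountableTopology Γ]
    (F : Γ → Matrix n n ℂ) (hF : Continuous F) (hH : ∀ x, (F x).IsHermitian) :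
    Continuous (fun x => vnEntropy (F x)) := by
  rw [continuous_iff_continuousAt]
  intro x0
  rw [ContinuousAt, tendsto_iff_seq_tendsto]
  intro u hu
  exact aux_vnEntropy_seq (fun m => F (u m)) (F x0) (fun m => hH (u m)) (hH x0)
    ((hF.tendsto x0).comp hu)

end AuxCont

noncomputable section AuxMain

open Matrix AuxSpec AuxConc Filter Set
open scoped Kronecker ComplexOrder Topology

variable {α β ι : Type*} [Fintype α] [Fintype β] [Fintype ι] [Nonempty ι]
  [DecidableEq α] [DecidableEq β]

instance aux_inst1 : FirstCountableTopology (Matrix β β ℂ) :=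
  inferInstanceAs (FirstCountableTopology (β → β → ℂ))

instance aux_inst3 : LocallyConvexSpace ℝ (Matrix β β ℂ) :=
  inferInstanceAs (LocallyConvexSpace ℝ (β → β → ℂ))

lemma aux_trB_continuous :
    Continuous (trB : Matrix (α × β) (α × β) ℂ → Matrix α α ℂ) :=
  continuous_matrix fun i j =>
    continuous_finset_sum _ fun k _ => continuous_id.matrix_elem (i, k) (j, k)

lemma aux_kron_continuous :
    Continuous (fun C : Matrix β β ℂ => ((1 : Matrix α α ℂ) ⊗ₖ C)) := by
  apply continuous_matrix
  intro p q
  show Continuous fun C : Matrix β β ℂ => (1 : Matrix α α ℂ) p.1 q.1 * C p.2 q.2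
  exact continuous_const.mul (continuous_id.matrix_elem _ _)

lemma aux_half_herm (A : Matrix β β ℂ) : ((2⁻¹ : ℂ) • (A + Aᴴ)).IsHermitian := by
  show ((2⁻¹ : ℂ) • (A + Aᴴ))ᴴ = (2⁻¹ : ℂ) • (A + Aᴴ)
  rw [Matrix.conjTranspose_smul, Matrix.conjTranspose_add, Matrix.conjTranspose_conjTranspose]
  rw [show star (2⁻¹ : ℂ) = (2⁻¹ : ℂ) by simp]
  rw [add_comm]

lemma aux_X_herm {ρ : Matrix (α × β) (α × β) ℂ} (hρ : ρ.IsHermitian)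
    {C : Matrix β β ℂ} (hC : C.IsHermitian) :
    (trB (ρ * ((1 : Matrix α α ℂ) ⊗ₖ C))).IsHermitian := by
  show (trB (ρ * ((1 : Matrix α α ℂ) ⊗ₖ C)))ᴴ = _
  rw [aux_trB_conjTranspose, Matrix.conjTranspose_mul, (aux_kron_one_herm hC).eq, hρ.eq,
    ← aux_trB_cyc]

lemma aux_povm_entry_bound {M : ι → Matrix β β ℂ} (hM : IsPOVM M) (i : ι) (a b : β) :
    ‖M i a b‖ ≤ (Fintype.card β : ℝ) := by
  have hnormsq : ∀ z : ℂ, Complex.normSq z = ‖z‖ ^ 2 := fun z => by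
    rw [Complex.normSq_eq_norm_sq]
  have htr_sum : ∑ j, (M j).trace.re = (Fintype.card β : ℝ) := by
    have h := congrArg (fun A : Matrix β β ℂ => A.trace.re) hM.2
    simp only [Matrix.trace_sum, Complex.re_sum, Matrix.trace_one] at h
    simpa using h
  have htri : (M i).trace.re ≤ (Fintype.card β : ℝ) := by
    rw [← htr_sum]
    exact Finset.single_le_sum (f := fun j => (M j).trace.re)
      (fun j _ => aux_psd_trace_re_nonneg (hM.1 j)) (Finset.mem_univ i)
  have hdiag : ∀ c, ((M i) c c).re ≤ (Fintype.card β : ℝ) := by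
    intro c
    refine le_trans ?_ htri
    rw [Matrix.trace, Complex.re_sum]
    exact Finset.single_le_sum (f := fun c => ((M i).diag c).re)
      (fun c _ => (Complex.le_def.mp (aux_psd_diag_nonneg (hM.1 i) c)).1) (Finset.mem_univ c)
  have hdiag0 : ∀ c, 0 ≤ ((M i) c c).re :=
    fun c => (Complex.le_def.mp (aux_psd_diag_nonneg (hM.1 i) c)).1
  obtain ⟨B, hB⟩ := Matrix.posSemidef_iff_eq_transpose_mul_self.mp (hM.1 i)
  have hcol : ∀ c : β, ∑ r, ‖B r c‖ ^ 2 = ((M i) c c).re := by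
    intro c
    rw [hB, Matrix.mul_apply, Complex.re_sum]
    refine Finset.sum_congr rfl fun r _ => ?_
    rw [Matrix.conjTranspose_apply]
    rw [show star (B r c) * B r c = ((Complex.normSq (B r c) : ℂ)) from
      (Complex.normSq_eq_conj_mul_self).symm ▸ rfl]
    rw [Complex.ofReal_re, hnormsq]
  set u : EuclideanSpace ℂ β := WithLp.toLp 2 (fun r => B r a) with hu
  set v : EuclideanSpace ℂ β := WithLp.toLp 2 (fun r => B r b) with hv
  have hinner : (inner ℂ u v : ℂ) = (M i) a b := by
    rw [hB, Matrix.mul_apply, PiLp.inner_apply]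
    refine Finset.sum_congr rfl fun r _ => ?_
    rw [Matrix.conjTranspose_apply, RCLike.inner_apply]
    exact mul_comm _ _
  have hnu : ‖u‖ = Real.sqrt ((M i) a a).re := by
    rw [EuclideanSpace.norm_eq, ← hcol a]
  have hnv : ‖v‖ = Real.sqrt ((M i) b b).re := by
    rw [EuclideanSpace.norm_eq, ← hcol b]
  calc ‖(M i) a b‖ = ‖(inner ℂ u v : ℂ)‖ := by rw [hinner]
    _ ≤ ‖u‖ * ‖v‖ := norm_inner_le_norm u v
    _ = Real.sqrt ((M i) a a).re * Real.sqrt ((M i) b b).re := by rw [hnu, hnv]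
    _ ≤ Real.sqrt (Fintype.card β : ℝ) * Real.sqrt (Fintype.card β : ℝ) := by
        exact mul_le_mul (Real.sqrt_le_sqrt (hdiag a)) (Real.sqrt_le_sqrt (hdiag b))
          (Real.sqrt_nonneg _) (Real.sqrt_nonneg _)
    _ = (Fintype.card β : ℝ) := Real.mul_self_sqrt (Nat.cast_nonneg _)

lemma aux_povm_closed :
    IsClosed {M : ι → Matrix β β ℂ | IsPOVM M} := by
  have h1 : IsClosed {M : ι → Matrix β β ℂ | ∑ i, M i = 1} :=
    isClosed_eq (continuous_finset_sum _ fun i _ => continuous_apply i) continuous_const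
  have h2 : ∀ i : ι, IsClosed {M : ι → Matrix β β ℂ | (M i).PosSemidef} := by
    intro i
    have hh : IsClosed {M : ι → Matrix β β ℂ | (M i).IsHermitian} :=
      isClosed_eq ((continuous_apply i).matrix_conjTranspose) (continuous_apply i)
    have hq : ∀ x : β → ℂ, IsClosed {M : ι → Matrix β β ℂ |
        0 ≤ dotProduct (star x) ((M i) *ᵥ x)} := by
      intro x
      have hcont : Continuous fun M : ι → Matrix β β ℂ =>
          dotProduct (star x) ((M i) *ᵥ x) :=
        continuous_const.dotProduct ((continuous_apply i).matrix_mulVec continuous_const)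
      have hK : IsClosed {z : ℂ | 0 ≤ z} := by
        have hset : {z : ℂ | 0 ≤ z} = Complex.re ⁻¹' (Set.Ici 0) ∩ Complex.im ⁻¹' {0} := by
          ext z
          simp only [Set.mem_setOf_eq, Complex.le_def, Set.mem_inter_iff, Set.mem_preimage,
            Set.mem_Ici, Set.mem_singleton_iff]
          constructor
          · rintro ⟨h1, h2⟩; exact ⟨by simpa using h1, by simpa using h2.symm⟩
          · rintro ⟨h1, h2⟩; exact ⟨by simpa using h1, by simp [h2]⟩
        rw [hset]
        exact (isClosed_Ici.preimage Complex.continuous_re).inter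
          (isClosed_singleton.preimage Complex.continuous_im)
      exact hK.preimage hcont
    have hdecomp : {M : ι → Matrix β β ℂ | (M i).PosSemidef}
        = {M | (M i).IsHermitian}
          ∩ ⋂ x : β → ℂ, {M | 0 ≤ dotProduct (star x) ((M i) *ᵥ x)} := by
      ext M
      simp only [Set.mem_setOf_eq, Set.mem_inter_iff, Set.mem_iInter]
      exact Matrix.posSemidef_iff_dotProduct_mulVec
    rw [hdecomp]
    exact hh.inter (isClosed_iInter hq)
  have hdecomp : {M : ι → Matrix β β ℂ | IsPOVM M}
      = (⋂ i, {M : ι → Matrix β β ℂ | (M i).PosSemidef}) ∩ {M | ∑ i, M i = 1} := by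
    ext M
    simp only [Set.mem_setOf_eq, Set.mem_inter_iff, Set.mem_iInter, IsPOVM]
  rw [hdecomp]
  exact (isClosed_iInter h2).inter h1

lemma aux_povm_compact :
    IsCompact {M : ι → Matrix β β ℂ | IsPOVM M} := by
  set d : ℝ := (Fintype.card β : ℝ) with hd
  set K : Set (ι → Matrix β β ℂ) :=
    Set.univ.pi fun _ : ι =>
      (Set.univ.pi fun _ : β => Set.univ.pi fun _ : β => Metric.closedBall (0 : ℂ) d :
        Set (Matrix β β ℂ)) with hK
  have hKcomp : IsCompact K := by
    apply isCompact_univ_pi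
    intro i
    show IsCompact (Set.univ.pi fun _ : β => Set.univ.pi fun _ : β => Metric.closedBall (0 : ℂ) d)
    exact isCompact_univ_pi fun a => isCompact_univ_pi fun b => isCompact_closedBall 0 d
  refine hKcomp.of_isClosed_subset aux_povm_closed ?_
  intro M hM
  rw [hK]; refine Set.mem_univ_pi.mpr ?_
  intro i
  refine Set.mem_univ_pi.mpr ?_
  intro a
  refine Set.mem_univ_pi.mpr ?_
  intro b
  rw [Metric.mem_closedBall, dist_zero_right]
  exact aux_povm_entry_bound hM i a b

lemma aux_povm_nonempty :
    Set.Nonempty {M : ι → Matrix β β ℂ | IsPOVM M} := by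
  refine ⟨fun _ => ((Fintype.card ι : ℝ))⁻¹ • (1 : Matrix β β ℂ), ?_, ?_⟩
  · intro i
    exact aux_psd_smul Matrix.PosSemidef.one (by positivity)
  · rw [Finset.sum_const, Finset.card_univ]
    have hcard : (Fintype.card ι : ℝ) ≠ 0 := by
      exact_mod_cast Fintype.card_ne_zero
    rw [← Nat.cast_smul_eq_nsmul ℝ, smul_smul, mul_inv_cancel₀ hcard, one_smul]

/-- Part 2: existence of a minimizing extreme point. -/
lemma aux_part2 (ρ : Matrix (α × β) (α × β) ℂ) (hρ : IsDensity ρ) :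
    ∃ M ∈ Set.extremePoints ℝ {M : ι → Matrix β β ℂ | IsPOVM M},
      ∀ N : ι → Matrix β β ℂ, IsPOVM N → povmMCE ρ M ≤ povmMCE ρ N := by
  set S : Set (ι → Matrix β β ℂ) := {M | IsPOVM M} with hS
  set Phi : ι → (ι → Matrix β β ℂ) → Matrix α α ℂ :=
    fun i M => trB (ρ * ((1 : Matrix α α ℂ) ⊗ₖ ((2⁻¹ : ℂ) • (M i + (M i)ᴴ)))) with hPhi
  have hPhiCont : ∀ i, Continuous (Phi i) := by
    intro i
    apply aux_trB_continuous.comp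
    apply Continuous.matrix_mul continuous_const
    apply aux_kron_continuous.comp
    exact ((continuous_apply i).add ((continuous_apply i).matrix_conjTranspose :
      Continuous fun M : ι → Matrix β β ℂ => (M i)ᴴ)).const_smul (2⁻¹ : ℂ)
  have hPhiHerm : ∀ i M, (Phi i M).IsHermitian :=
    fun i M => aux_X_herm hρ.1.isHermitian (aux_half_herm (M i))
  have hPhiS : ∀ (i : ι), ∀ M ∈ S, Phi i M = trB (ρ * ((1 : Matrix α α ℂ) ⊗ₖ M i)) := by
    intro i M hM
    have hMh : (M i)ᴴ = M i := (hM.1 i).isHermitian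
    have hhalf : (2⁻¹ : ℂ) • (M i + (M i)ᴴ) = M i := by
      rw [hMh, ← two_smul ℂ (M i), smul_smul]
      norm_num
    rw [hPhi]
    simp only
    rw [hhalf]
  set H : (ι → Matrix β β ℂ) → ℝ :=
    fun M => ∑ i, (vnEntropy (Phi i M) - negxlog ((Phi i M).trace.re)) with hHdef
  have hHcont : Continuous H := by
    apply continuous_finset_sum
    intro i _
    exact (aux_vn_comp_continuous (Phi i) (hPhiCont i) (hPhiHerm i)).sub
      (aux_negxlog_continuous.comp (Complex.continuous_re.comp ((hPhiCont i).matrix_trace)))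
  have hHS : ∀ M ∈ S, povmMCE ρ M = H M := by
    intro M hM
    rw [aux_povmMCE_eq, hHdef]
    refine Finset.sum_congr rfl fun i _ => ?_
    rw [hPhiS i M hM]
    exact aux_gid (aux_X_psd hρ.1 (hM.1 i))
  obtain ⟨M0, hM0S, hmin⟩ :=
    aux_povm_compact.exists_isMinOn aux_povm_nonempty hHcont.continuousOn
  set m : ℝ := H M0 with hm
  set T : Set (ι → Matrix β β ℂ) := S ∩ H ⁻¹' (Set.Iic m) with hT
  have hTcomp : IsCompact T := aux_povm_compact.inter_right (isClosed_Iic.preimage hHcont)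
  have hTne : T.Nonempty := ⟨M0, hM0S, le_refl m⟩
  have hText : IsExtreme ℝ S T := by
    constructor
    · exact Set.inter_subset_left
    · rintro x1 hx1 x2 hx2 x ⟨hxS, hxm⟩ hseg
      obtain ⟨a, b, ha, hb, hab, hxe⟩ := hseg
      have hb' : b = 1 - a := by linarith
      have hxeq : x = fun i => a • x1 i + (1 - a) • x2 i := by
        rw [← hxe, hb']
        rfl
      have hpart1 := aux_part1 ρ hρ x1 x2 hx1 hx2 a ha.le (by linarith)
      rw [← hxeq] at hpart1
      rw [hHS x1 hx1, hHS x2 hx2, hHS x hxS] at hpart1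
      have hxm' : H x ≤ m := hxm
      have h1 : m ≤ H x1 := isMinOn_iff.mp hmin x1 hx1
      have h2 : m ≤ H x2 := isMinOn_iff.mp hmin x2 hx2
      have hax1 : H x1 ≤ m := by nlinarith
      have hax2 : H x2 ≤ m := by nlinarith
      exact ⟨hx1, hax1⟩
  obtain ⟨E, hE⟩ := hTcomp.extremePoints_nonempty hTne
  have hES : E ∈ Set.extremePoints ℝ S :=
    hText.extremePoints_subset_extremePoints hE
  have hET : E ∈ T := extremePoints_subset hE
  refine ⟨E, hES, fun N hN => ?_⟩
  have hEm : H E ≤ m := hET.2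
  have hNm : m ≤ H N := isMinOn_iff.mp hmin N hN
  rw [hHS E hET.1, hHS N hN]
  linarith

end AuxMain






/-- the measured conditional entropy is concave on the convex set of POVMs,
hence its minimum is attained at an extreme point. -/
theorem measured_condEnt_concave_min_at_extreme
    {α β ι : Type*} [Fintype α] [Fintype β] [Fintype ι] [Nonempty ι]
    [DecidableEq α] [DecidableEq β]
    (ρ : Matrix (α × β) (α × β) ℂ) (hρ : IsDensity ρ) :
    (∀ M N : ι → Matrix β β ℂ, IsPOVM M → IsPOVM N → ∀ t : ℝ, 0 ≤ t → t ≤ 1 →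
      t * povmMCE ρ M + (1 - t) * povmMCE ρ N ≤
        povmMCE ρ (fun i => t • M i + (1 - t) • N i)) ∧
    ∃ M ∈ Set.extremePoints ℝ {M : ι → Matrix β β ℂ | IsPOVM M},
      ∀ N : ι → Matrix β β ℂ, IsPOVM N → povmMCE ρ M ≤ povmMCE ρ N := by
  constructor
  · intro M N hM hN t ht0 ht1
    exact aux_part1 ρ hρ M N hM hN t ht0 ht1
  · exact aux_part2 ρ hρ
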